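/- Let k be a field and C a k-linear Krull–Schmidt category. Fix a set I of representatives of the isomorphism classes of indecomposable objects, and for x ∈ I write D_x = End_C(x)/J(End_C(x)), a division algebra over k. If for every x ∈ I the identity 1_{D_x} does not lie in the k-linear span of the commutators {ab − ba : a, b ∈ D_x}, then the Chern character h_C : K_0(C) ⊗_ℤ k → Tr(C) is injective. -/

import Mathlib

open CategoryTheory CategoryTheory.Limits

universe v u

variable (k : Type*) [Field k]

attribute [local instance] CategoryTheory.Limits.hasBinaryBiproducts_of_finite_biproducts

/-- The submodule of commutator relations defining the trace of a `k`-linear category. -/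
noncomputable def traceRel (C : Type u) [Category.{v} C] [Preadditive C]
    [CategoryTheory.Linear k C] : Submodule k (DirectSum C fun x : C => x ⟶ x) :=
  letI := Classical.decEq C
  Submodule.span k
    {z | ∃ (x y : C) (f : x ⟶ y) (g : y ⟶ x),
      z = DirectSum.of (fun w : C => w ⟶ w) x (f ≫ g)
        - DirectSum.of (fun w : C => w ⟶ w) y (g ≫ f)}

/-- The trace (zeroth Hochschild–Mitchell homology) of a `k`-linear category:
`(⊕ₓ End x) / span{fg - gf}`. -/
noncomputable abbrev Trace (C : Type u) [Category.{v} C] [Preadditive C]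
    [CategoryTheory.Linear k C] : Type _ :=
  (DirectSum C fun x : C => x ⟶ x) ⧸ traceRel k C

/-- The class `[f]` of an endomorphism `f : x ⟶ x` in the trace. -/
noncomputable def traceMk {C : Type u} [Category.{v} C] [Preadditive C]
    [CategoryTheory.Linear k C] {x : C} (f : x ⟶ x) : Trace k C :=
  letI := Classical.decEq C
  Submodule.Quotient.mk (DirectSum.of (fun w : C => w ⟶ w) x f)

theorem traceMk_eq_of_iso {C : Type u} [Category.{v} C] [Preadditive C]
    [CategoryTheory.Linear k C] {x y : C} (e : x ≅ y) :
    traceMk k (𝟙 x) = traceMk k (𝟙 y) := by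
  letI := Classical.decEq C
  unfold traceMk
  rw [Submodule.Quotient.eq, traceRel]
  refine Submodule.subset_span ⟨x, y, e.hom, e.inv, ?_⟩
  rw [Iso.hom_inv_id, Iso.inv_hom_id]

theorem traceMk_comp_comm {C : Type u} [Category.{v} C] [Preadditive C]
    [CategoryTheory.Linear k C] {x y : C} (f : x ⟶ y) (g : y ⟶ x) :
    traceMk k (f ≫ g) = traceMk k (g ≫ f) := by
  letI := Classical.decEq C
  unfold traceMk
  rw [Submodule.Quotient.eq, traceRel]
  exact Submodule.subset_span ⟨x, y, f, g, rfl⟩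

theorem traceMk_add {C : Type u} [Category.{v} C] [Preadditive C]
    [CategoryTheory.Linear k C] {x : C} (f g : x ⟶ x) :
    traceMk k (f + g) = traceMk k f + traceMk k g := by
  letI := Classical.decEq C
  unfold traceMk
  rw [map_add, Submodule.Quotient.mk_add]

theorem traceMk_biprod {C : Type u} [Category.{v} C] [Preadditive C]
    [CategoryTheory.Linear k C] [HasFiniteBiproducts C] (x y : C) :
    traceMk k (𝟙 (x ⊞ y)) = traceMk k (𝟙 x) + traceMk k (𝟙 y) := by
  have h1 : traceMk k (biprod.fst ≫ biprod.inl : x ⊞ y ⟶ x ⊞ y) = traceMk k (𝟙 x) := by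
    rw [traceMk_comp_comm, biprod.inl_fst]
  have h2 : traceMk k (biprod.snd ≫ biprod.inr : x ⊞ y ⟶ x ⊞ y) = traceMk k (𝟙 y) := by
    rw [traceMk_comp_comm, biprod.inr_snd]
  rw [← h1, ← h2, ← traceMk_add, biprod.total]


/-- The relations defining the (split) Grothendieck group with coefficients extended to `k`:
`[x ⊕ y] - [x] - [y]`, together with `[x] - [y]` for isomorphic `x` and `y`. -/
noncomputable def K0Rel (C : Type u) [Category.{v} C] [Preadditive C]
    [CategoryTheory.Linear k C] [HasFiniteBiproducts C] : Submodule k (C →₀ k) :=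
  Submodule.span k
    ({z | ∃ x y : C, z = Finsupp.single (x ⊞ y) (1 : k)
        - Finsupp.single x 1 - Finsupp.single y 1} ∪
     {z | ∃ x y : C, Nonempty (x ≅ y) ∧
        z = Finsupp.single x (1 : k) - Finsupp.single y 1})

/-- The split Grothendieck group of `C`, with coefficients extended from `ℤ` to `k`,
i.e. `K₀(C) ⊗_ℤ k`. -/
noncomputable abbrev K0k (C : Type u) [Category.{v} C] [Preadditive C]
    [CategoryTheory.Linear k C] [HasFiniteBiproducts C] : Type _ :=
  (C →₀ k) ⧸ K0Rel k C

/-- The class `[x] ⊗ 1` of an object `x` in `K₀(C) ⊗_ℤ k`. -/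
noncomputable def K0mk {C : Type u} [Category.{v} C] [Preadditive C]
    [CategoryTheory.Linear k C] [HasFiniteBiproducts C] (x : C) : K0k k C :=
  Submodule.Quotient.mk (Finsupp.single x (1 : k))

/-- The Chern character `h_C : K₀(C) ⊗_ℤ k → Tr(C)`, determined by `[x] ⊗ 1 ↦ [1ₓ]`. -/
noncomputable def chern (C : Type u) [Category.{v} C] [Preadditive C]
    [CategoryTheory.Linear k C] [HasFiniteBiproducts C] : K0k k C →ₗ[k] Trace k C :=
  Submodule.liftQ (K0Rel k C)
    (Finsupp.linearCombination k (fun x : C => traceMk k (𝟙 x)))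
    (by
      rw [K0Rel, Submodule.span_le]
      rintro z (⟨x, y, rfl⟩ | ⟨x, y, ⟨e⟩, rfl⟩) <;>
        simp only [SetLike.mem_coe, LinearMap.mem_ker, map_sub,
          Finsupp.linearCombination_single, one_smul]
      · rw [traceMk_biprod]; abel
      · rw [traceMk_eq_of_iso k e]; abel)

/-- A `k`-linear additive category is Krull–Schmidt if every object decomposes as a finite
direct sum of indecomposable objects with local endomorphism rings, uniquely up to
isomorphism and permutation of the summands. -/
def KrullSchmidt (C : Type u) [Category.{v} C] [Preadditive C]
    [CategoryTheory.Linear k C] [HasFiniteBiproducts C] : Prop :=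
  (∀ x : C, ∃ (n : ℕ) (f : Fin n → C),
      (∀ i, CategoryTheory.Indecomposable (f i) ∧ IsLocalRing (End (f i))) ∧ Nonempty (x ≅ ⨁ f)) ∧
  (∀ (n m : ℕ) (f : Fin n → C) (g : Fin m → C),
      (∀ i, CategoryTheory.Indecomposable (f i) ∧ IsLocalRing (End (f i))) →
      (∀ j, CategoryTheory.Indecomposable (g j) ∧ IsLocalRing (End (g j))) →
      Nonempty ((⨁ f) ≅ ⨁ g) →
      ∃ σ : Fin n ≃ Fin m, ∀ i, Nonempty (f i ≅ g (σ i)))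

section AuxLocalRing

variable {R : Type*} [Ring R] [IsLocalRing R]

theorem myIdem (e : R) (he : e * e = e) : e = 0 ∨ e = 1 := by
  by_cases hu : IsUnit e
  · exact Or.inr (hu.mul_left_cancel (he.trans (mul_one e).symm))
  · left
    have h1 : IsUnit (1 - e) := by
      rcases IsLocalRing.isUnit_or_isUnit_of_add_one (a := e) (b := 1 - e)
        (by noncomm_ring) with h | h
      · exact absurd h hu
      · exact h
    exact h1.mul_left_cancel (by rw [sub_mul, one_mul, he, sub_self, mul_zero])

theorem myUnit_of_left (t a : R) (h : t * a = 1) : IsUnit a := by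
  rcases myIdem (a * t) (by rw [mul_assoc, ← mul_assoc t, h, one_mul]) with h0 | h1
  · exfalso
    have ha : a = 0 := by
      calc a = a * (t * a) := by rw [h, mul_one]
      _ = (a * t) * a := by rw [mul_assoc]
      _ = 0 := by rw [h0, zero_mul]
    rw [ha, mul_zero] at h
    exact one_ne_zero h.symm
  · exact ⟨⟨a, t, h1, h⟩, rfl⟩

theorem myUnit_of_right (t a : R) (h : a * t = 1) : IsUnit a := by
  rcases myIdem (t * a) (by rw [mul_assoc, ← mul_assoc a, h, one_mul]) with h0 | h1
  · exfalso
    have ha : a = 0 := by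
      calc a = (a * t) * a := by rw [h, one_mul]
      _ = a * (t * a) := by rw [mul_assoc]
      _ = 0 := by rw [h0, mul_zero]
    rw [ha, zero_mul] at h
    exact one_ne_zero h.symm
  · exact ⟨⟨a, t, h, h1⟩, rfl⟩

theorem myUnit_of_mul_left {a b : R} (h : IsUnit (a * b)) : IsUnit b := by
  obtain ⟨u, hu⟩ := h
  have : ((↑u⁻¹ : R) * a) * b = 1 := by rw [mul_assoc, ← hu, ← Units.val_mul]; simp
  exact myUnit_of_left _ _ this

theorem myUnit_of_mul_right {a b : R} (h : IsUnit (a * b)) : IsUnit a := by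
  obtain ⟨u, hu⟩ := h
  have : a * (b * (↑u⁻¹ : R)) = 1 := by rw [← mul_assoc, ← hu, ← Units.val_mul]; simp
  exact myUnit_of_right _ _ this

theorem mem_jacobson_bot_of_not_isUnit {a : R} (h : ¬IsUnit a) :
    a ∈ Ideal.jacobson (⊥ : Ideal R) := by
  rw [Ideal.mem_jacobson_iff]
  intro y
  have hya : ¬IsUnit (y * a) := fun hu => h (myUnit_of_mul_left hu)
  have hyu : IsUnit (y * a + 1) := by
    rcases IsLocalRing.isUnit_or_isUnit_of_add_one (a := -(y*a)) (b := y*a+1)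
      (by rw [← add_assoc, neg_add_cancel, zero_add]) with hh | hh
    · exact absurd (by simpa using hh.neg) hya
    · exact hh
  obtain ⟨u, hu⟩ := hyu
  refine ⟨↑u⁻¹, ?_⟩
  have h1 : (↑u⁻¹ : R) * (y * a + 1) = 1 := by rw [← hu, ← Units.val_mul]; simp
  rw [Ideal.mem_bot, sub_eq_zero, ← h1, mul_add, mul_one, ← mul_assoc]

theorem not_isUnit_of_mem_jacobson_bot {a : R} (h : a ∈ Ideal.jacobson (⊥ : Ideal R)) :
    ¬IsUnit a := by
  intro hu
  have htop : Ideal.jacobson (⊥ : Ideal R) = ⊤ := Ideal.eq_top_of_isUnit_mem _ h hu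
  rw [Ideal.jacobson_eq_top_iff] at htop
  have : (1 : R) ∈ (⊥ : Ideal R) := htop ▸ Submodule.mem_top
  exact one_ne_zero (Ideal.mem_bot.mp this)

end AuxLocalRing

theorem isLocalRing_of_ringEquiv {R S : Type*} [Ring R] [Ring S] (e : R ≃+* S)
    (h : IsLocalRing R) : IsLocalRing S := by
  haveI := h
  haveI : Nontrivial S := e.symm.toEquiv.nontrivial
  refine ⟨fun {a b} hab => ?_⟩
  have : e.symm a + e.symm b = 1 := by rw [← map_add, hab, map_one]
  rcases IsLocalRing.isUnit_or_isUnit_of_add_one this with hh | hh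
  · left
    have := hh.map e.toRingHom
    simpa using this
  · right
    have := hh.map e.toRingHom
    simpa using this
section AuxCat

variable {C : Type u} [Category.{v} C] [Preadditive C]

theorem comp_not_isUnit {x y : C} (hx : ¬IsZero x) (hy : IsLocalRing (End y))
    (hiso : ¬Nonempty (x ≅ y)) (u : x ⟶ y) (v : y ⟶ x) :
    ¬IsUnit (show End x from u ≫ v) := by
  rintro ⟨w', hw'⟩
  have hA : (u ≫ v) ≫ (↑w'⁻¹ : End x) = 𝟙 x := by
    have : (↑w'⁻¹ : End x) * (↑w' : End x) = 1 := by simp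
    rw [hw'] at this
    exact this
  set w : x ⟶ x := (↑w'⁻¹ : End x) with hw
  have hA' : u ≫ v ≫ w = 𝟙 x := by rw [← Category.assoc]; exact hA
  set e : End y := v ≫ w ≫ u with he
  have hee : e * e = e := by
    show e ≫ e = e
    calc (v ≫ w ≫ u) ≫ (v ≫ w ≫ u) = v ≫ w ≫ (u ≫ v ≫ w) ≫ u := by
          simp only [Category.assoc]
    _ = v ≫ w ≫ u := by rw [hA', Category.id_comp]
  haveI := hy
  rcases myIdem e hee with h0 | h1
  · have hvw : v ≫ w = 0 := by
      calc v ≫ w = (v ≫ w ≫ u) ≫ (v ≫ w) := by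
            rw [show (v ≫ w ≫ u) ≫ (v ≫ w) = v ≫ w ≫ (u ≫ v ≫ w) by simp only [Category.assoc],
              hA', Category.comp_id]
      _ = 0 := by rw [show (v ≫ w ≫ u : y ⟶ y) = e from rfl, h0, Limits.zero_comp]
    have : 𝟙 x = 0 := by rw [← hA', hvw, Limits.comp_zero]
    exact hx (IsZero.iff_id_eq_zero x |>.mpr this)
  · haveI : IsIso u := ⟨⟨v ≫ w, by rw [← Category.assoc] at hA' ⊢; simpa using hA',
      by rw [show (v ≫ w) ≫ u = e from (Category.assoc _ _ _), h1]; rfl⟩⟩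
    exact hiso ⟨asIso u⟩

/-- Conjugation by an isomorphism, as a ring isomorphism of endomorphism rings. -/
noncomputable def conjRing {x y : C} (e : x ≅ y) : End x ≃+* End y :=
  { Iso.conj e with
    map_add' := fun f g => by
      show e.inv ≫ ((f : x ⟶ x) + (g : x ⟶ x)) ≫ e.hom
          = e.inv ≫ (f : x ⟶ x) ≫ e.hom + e.inv ≫ (g : x ⟶ x) ≫ e.hom
      rw [Preadditive.add_comp, Preadditive.comp_add] }

section Biprods
variable [HasFiniteBiproducts C]

/-- Splitting off the first summand of a finite biproduct. -/
noncomputable def binFission (n : ℕ) (f : Fin (n + 1) → C) :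
    (⨁ f) ≅ (f 0) ⊞ (⨁ (f ∘ Fin.succ)) where
  hom := biprod.lift (biproduct.π f 0) (biproduct.lift fun i => biproduct.π f i.succ)
  inv := biprod.desc (biproduct.ι f 0) (biproduct.desc fun i => biproduct.ι f i.succ)
  hom_inv_id := by
    rw [biprod.lift_desc, biproduct.lift_desc, ← biproduct.total, Fin.sum_univ_succ]
  inv_hom_id := by
    ext j j'
    · simp [biproduct.ι_π, Fin.succ_ne_zero]
    · rename_i j
      simp only [Category.assoc, biprod.inl_desc_assoc, biprod.inr_desc_assoc,
        biproduct.ι_desc_assoc, biprod.lift_fst, biprod.lift_snd, biproduct.lift_π,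
        Category.comp_id, biprod.inl_fst_assoc, biprod.inl_snd_assoc, biprod.inr_fst_assoc,
        biprod.inr_snd_assoc, Function.comp_apply, Category.id_comp]
      rw [biproduct.ι_π_ne _ (Fin.succ_ne_zero j).symm]
      simp
    · rename_i j
      simp only [Category.assoc, biprod.inr_desc_assoc, biproduct.ι_desc_assoc,
        biprod.lift_fst, biproduct.lift_π, Category.comp_id, biprod.inr_fst_assoc,
        Function.comp_apply, Limits.comp_zero, Limits.zero_comp]
      rw [biproduct.ι_π_ne _ (Fin.succ_ne_zero j)]
      simp
    · simp only [Category.assoc, biprod.inr_desc_assoc, biproduct.ι_desc_assoc,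
        biprod.lift_snd, biproduct.lift_π, Category.comp_id, biprod.inr_snd_assoc,
        Function.comp_apply, Category.id_comp]
      by_cases hjj : j = j'
      · subst hjj; simp [biproduct.ι_π_self]
      · rw [biproduct.ι_π_ne _ (fun h => hjj (Fin.succ_inj.mp h)),
          biproduct.ι_π_ne _ hjj]

theorem isZero_biproduct_fin_zero (f : Fin 0 → C) : IsZero (⨁ f) := by
  rw [IsZero.iff_id_eq_zero, ← biproduct.total]
  simp

theorem n_eq_one_of_indecomposable {x : C} (hx : Indecomposable x) (n : ℕ) (f : Fin n → C)
    (hf : ∀ i, ¬IsZero (f i)) (e : x ≅ ⨁ f) : n = 1 := by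
  match n with
  | 0 => exact absurd ((isZero_biproduct_fin_zero f).of_iso e) hx.1
  | 1 => rfl
  | (m + 2) =>
    exfalso
    rcases hx.2 _ _ (e ≪≫ binFission (m+1) f) with h | h
    · exact hf 0 h
    · refine hf 1 ?_
      rw [IsZero.iff_id_eq_zero] at h ⊢
      have : 𝟙 ((f ∘ Fin.succ) 0) = biproduct.ι (f ∘ Fin.succ) 0 ≫ biproduct.π (f ∘ Fin.succ) 0 :=
        (biproduct.ι_π_self _ _).symm
      rw [show f 1 = (f ∘ Fin.succ) 0 from rfl, this,
        show biproduct.ι (f ∘ Fin.succ) 0 ≫ biproduct.π (f ∘ Fin.succ) 0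
          = biproduct.ι (f ∘ Fin.succ) 0 ≫ 𝟙 _ ≫ biproduct.π (f ∘ Fin.succ) 0 from
            (congrArg (biproduct.ι (f ∘ Fin.succ) 0 ≫ ·) (Category.id_comp _)).symm, h]
      rw [Limits.zero_comp, Limits.comp_zero]

theorem sum_fin_one {M : Type*} [AddCommMonoid M] {n : ℕ} (hn : n = 1) (t : Fin n → M)
    (i : Fin n) : (∑ j, t j) = t i := by
  subst hn
  rw [Fin.sum_univ_one]
  congr 1
  exact Subsingleton.elim _ _

/-- For a one-element family, the biproduct is isomorphic to any member. -/
noncomputable def biproductOfOne {n : ℕ} (hn : n = 1) (f : Fin n → C) (i : Fin n) :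
    (⨁ f) ≅ f i where
  hom := biproduct.π f i
  inv := biproduct.ι f i
  hom_inv_id := by
    rw [← biproduct.total]
    exact (sum_fin_one hn (fun j => biproduct.π f j ≫ biproduct.ι f j) i).symm
  inv_hom_id := biproduct.ι_π_self f i

end Biprods
end AuxCat
attribute [local instance] Classical.decEq

section AuxK0

variable {C : Type u} [Category.{v} C] [Preadditive C] [CategoryTheory.Linear k C]
  [HasFiniteBiproducts C]

theorem K0mk_eq_of_iso {x y : C} (h : Nonempty (x ≅ y)) : K0mk k x = K0mk k y := by
  unfold K0mk
  rw [Submodule.Quotient.eq, K0Rel]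
  apply Submodule.subset_span
  right
  exact ⟨x, y, h, rfl⟩

theorem K0mk_biprod (x y : C) : K0mk k (x ⊞ y) = K0mk k x + K0mk k y := by
  unfold K0mk
  rw [← Submodule.Quotient.mk_add, Submodule.Quotient.eq, K0Rel]
  apply Submodule.subset_span
  left
  exact ⟨x, y, by rw [sub_add_eq_sub_sub]⟩

theorem K0mk_zero {z : C} (hz : IsZero z) : K0mk k z = 0 := by
  have hzz : IsZero (z ⊞ z) := by
    rw [IsZero.iff_id_eq_zero, ← biprod.total, hz.eq_of_src biprod.inl 0,
      hz.eq_of_src biprod.inr 0]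
    simp
  have h3 : K0mk k z + K0mk k z = K0mk k z := by
    rw [← K0mk_biprod, K0mk_eq_of_iso k ⟨hzz.iso hz⟩]
  exact add_eq_left.mp h3

theorem K0mk_biproduct (n : ℕ) (f : Fin n → C) : K0mk k (⨁ f) = ∑ i, K0mk k (f i) := by
  induction n with
  | zero =>
    rw [Fin.sum_univ_zero]
    exact K0mk_zero k (isZero_biproduct_fin_zero f)
  | succ m ih =>
    rw [K0mk_eq_of_iso k ⟨binFission m f⟩, K0mk_biprod, ih (f ∘ Fin.succ), Fin.sum_univ_succ]
    rfl

end AuxK0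

/-- Decomposition data: a presentation of an object as finite biproduct of representatives of
indecomposables with local endomorphism rings. -/
structure DecData (C : Type u) [Category.{v} C] [Preadditive C] [HasFiniteBiproducts C]
    (Irep : Set C) (z : C) where
  n : ℕ
  f : Fin n → C
  mem : ∀ i, f i ∈ Irep
  loc : ∀ i, IsLocalRing (End (f i))
  iso : z ≅ ⨁ f

section Tau

variable {C : Type u} [Category.{v} C] [Preadditive C] [CategoryTheory.Linear k C]
  [HasFiniteBiproducts C] {Irep : Set C}

/-- The submodule of `End x` spanned by the Jacobson radical together with commutators. -/
noncomputable def Wsub (x : C) : Submodule k (End x) :=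
  Submodule.restrictScalars k (Ideal.jacobson (⊥ : Ideal (End x))) ⊔
    Submodule.span k {z : End x | ∃ a b : End x, z = a * b - b * a}

/-- Two-sided composition, as a linear map between Hom spaces. -/
noncomputable def sandwich {x y z : C} (a : z ⟶ x) (b : y ⟶ z) : (x ⟶ y) →ₗ[k] End z where
  toFun g := a ≫ g ≫ b
  map_add' f g := by
    show a ≫ (f + g) ≫ b = (a ≫ f ≫ b : z ⟶ z) + (a ≫ g ≫ b : z ⟶ z)
    rw [Preadditive.add_comp, Preadditive.comp_add]
  map_smul' r g := by
    show a ≫ (r • g) ≫ b = r • (a ≫ g ≫ b : z ⟶ z)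
    rw [CategoryTheory.Linear.smul_comp, CategoryTheory.Linear.comp_smul]

/-- The local Hattori–Stallings-type trace supported at each representative. -/
noncomputable def tau (d : ∀ w : C, DecData C Irep w) (z : C) :
    End z →ₗ[k] (∀ x : C, End x ⧸ Wsub k x) :=
  LinearMap.pi fun x => ∑ i : Fin (d z).n,
    if h : (d z).f i = x then
      (Wsub k x).mkQ ∘ₗ sandwich k (eqToHom h.symm ≫ biproduct.ι (d z).f i ≫ (d z).iso.inv)
        ((d z).iso.hom ≫ biproduct.π (d z).f i ≫ eqToHom h)
    else 0

theorem tau_apply (d : ∀ w : C, DecData C Irep w) (z : C) (g : End z) (x : C) :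
    tau k d z g x = ∑ i : Fin (d z).n,
      if h : (d z).f i = x then
        (Wsub k x).mkQ (eqToHom h.symm ≫ biproduct.ι (d z).f i ≫ (d z).iso.inv ≫ g ≫
          (d z).iso.hom ≫ biproduct.π (d z).f i ≫ eqToHom h)
      else 0 := by
  rw [tau, LinearMap.pi_apply, LinearMap.sum_apply]
  refine Finset.sum_congr rfl fun i _ => ?_
  split
  · simp [sandwich, Category.assoc]
  · rfl

end Tau
section TauRel

variable {C : Type u} [Category.{v} C] [Preadditive C] [CategoryTheory.Linear k C]
  [HasFiniteBiproducts C] {Irep : Set C}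

theorem mkQ_comm {x : C} (u v : End x) :
    (Wsub k x).mkQ (u * v) = (Wsub k x).mkQ (v * u) := by
  rw [← sub_eq_zero, ← map_sub, Submodule.mkQ_apply, Submodule.Quotient.mk_eq_zero]
  exact le_sup_right (α := Submodule k (End x)) (Submodule.subset_span ⟨u, v, rfl⟩)

theorem mkQ_jac {x : C} (u : End x) (hu : u ∈ Ideal.jacobson (⊥ : Ideal (End x))) :
    (Wsub k x).mkQ u = 0 := by
  rw [Submodule.mkQ_apply, Submodule.Quotient.mk_eq_zero]
  exact le_sup_left (α := Submodule k (End x)) hu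

theorem key_term (hrep₁ : ∀ x ∈ Irep, Indecomposable x)
    (hrep₃ : ∀ y ∈ Irep, ∀ y' ∈ Irep, Nonempty (y ≅ y') → y = y')
    {x y : C} (hx : x ∈ Irep) (hy : y ∈ Irep)
    (hlx : IsLocalRing (End x)) (hly : IsLocalRing (End y))
    (u : x ⟶ y) (v : y ⟶ x) (w : C) :
    (if h : x = w then (Wsub k w).mkQ (eqToHom h.symm ≫ (u ≫ v) ≫ eqToHom h) else 0)
      = (if h : y = w then (Wsub k w).mkQ (eqToHom h.symm ≫ (v ≫ u) ≫ eqToHom h) else 0) := by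
  by_cases hxw : x = w
  · subst hxw
    by_cases hyw : y = x
    · subst hyw
      rw [dif_pos rfl, dif_pos rfl]
      simp only [eqToHom_refl, Category.comp_id, Category.id_comp]
      exact mkQ_comm k (show End _ from v) (show End _ from u)
    · rw [dif_pos rfl, dif_neg hyw]
      simp only [eqToHom_refl, Category.comp_id, Category.id_comp]
      apply mkQ_jac
      haveI := hlx
      apply mem_jacobson_bot_of_not_isUnit
      exact comp_not_isUnit (hrep₁ x hx).1 hly
        (fun ⟨e⟩ => hyw (hrep₃ y hy x hx ⟨e.symm⟩)) u v
  · by_cases hyw : y = w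
    · subst hyw
      rw [dif_neg hxw, dif_pos rfl]
      simp only [eqToHom_refl, Category.comp_id, Category.id_comp]
      symm
      apply mkQ_jac
      haveI := hly
      apply mem_jacobson_bot_of_not_isUnit
      exact comp_not_isUnit (hrep₁ y hy).1 hlx
        (fun ⟨e⟩ => hxw (hrep₃ x hx y hy ⟨e.symm⟩)) v u
    · rw [dif_neg hxw, dif_neg hyw]

theorem tau_rel (hrep₁ : ∀ x ∈ Irep, Indecomposable x)
    (hrep₃ : ∀ y ∈ Irep, ∀ y' ∈ Irep, Nonempty (y ≅ y') → y = y')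
    (d : ∀ w : C, DecData C Irep w) {a b : C} (f : a ⟶ b) (g : b ⟶ a) :
    tau k d a (f ≫ g) = tau k d b (g ≫ f) := by
  funext x
  rw [tau_apply, tau_apply]
  set A := d a with hA
  set B := d b with hB
  -- the matrix entries
  set u : ∀ (i : Fin A.n) (j : Fin B.n), A.f i ⟶ B.f j := fun i j =>
    biproduct.ι A.f i ≫ A.iso.inv ≫ f ≫ B.iso.hom ≫ biproduct.π B.f j with hu
  set v : ∀ (j : Fin B.n) (i : Fin A.n), B.f j ⟶ A.f i := fun j i =>
    biproduct.ι B.f j ≫ B.iso.inv ≫ g ≫ A.iso.hom ≫ biproduct.π A.f i with hv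
  have mor1 : ∀ i : Fin A.n,
      biproduct.ι A.f i ≫ A.iso.inv ≫ (f ≫ g) ≫ A.iso.hom ≫ biproduct.π A.f i
        = ∑ j : Fin B.n, (u i j ≫ v j i) := by
    intro i
    have : (f ≫ g : a ⟶ a)
        = f ≫ B.iso.hom ≫ (∑ j : Fin B.n, biproduct.π B.f j ≫ biproduct.ι B.f j) ≫
            B.iso.inv ≫ g := by
      rw [biproduct.total]
      simp
    rw [this]
    simp only [hu, hv, Preadditive.sum_comp, Preadditive.comp_sum, Category.assoc]
  have mor2 : ∀ j : Fin B.n,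
      biproduct.ι B.f j ≫ B.iso.inv ≫ (g ≫ f) ≫ B.iso.hom ≫ biproduct.π B.f j
        = ∑ i : Fin A.n, (v j i ≫ u i j) := by
    intro j
    have : (g ≫ f : b ⟶ b)
        = g ≫ A.iso.hom ≫ (∑ i : Fin A.n, biproduct.π A.f i ≫ biproduct.ι A.f i) ≫
            A.iso.inv ≫ f := by
      rw [biproduct.total]
      simp
    rw [this]
    simp only [hu, hv, Preadditive.sum_comp, Preadditive.comp_sum, Category.assoc]
  calc (∑ i : Fin A.n, if h : A.f i = x then
          (Wsub k x).mkQ (eqToHom h.symm ≫ biproduct.ι A.f i ≫ A.iso.inv ≫ (f ≫ g) ≫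
            A.iso.hom ≫ biproduct.π A.f i ≫ eqToHom h) else 0)
      = ∑ i : Fin A.n, ∑ j : Fin B.n, (if h : A.f i = x then
          (Wsub k x).mkQ (eqToHom h.symm ≫ (u i j ≫ v j i) ≫ eqToHom h) else 0) := by
        refine Finset.sum_congr rfl fun i _ => ?_
        by_cases h : A.f i = x
        · rw [dif_pos h]
          have : eqToHom h.symm ≫ biproduct.ι A.f i ≫ A.iso.inv ≫ (f ≫ g) ≫
                A.iso.hom ≫ biproduct.π A.f i ≫ eqToHom h
              = ∑ j : Fin B.n, eqToHom h.symm ≫ (u i j ≫ v j i) ≫ eqToHom h := by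
            rw [show eqToHom h.symm ≫ biproduct.ι A.f i ≫ A.iso.inv ≫ (f ≫ g) ≫
                  A.iso.hom ≫ biproduct.π A.f i ≫ eqToHom h
                = eqToHom h.symm ≫ (biproduct.ι A.f i ≫ A.iso.inv ≫ (f ≫ g) ≫
                  A.iso.hom ≫ biproduct.π A.f i) ≫ eqToHom h by simp only [Category.assoc],
              mor1 i, Preadditive.sum_comp, Preadditive.comp_sum]
          rw [this, map_sum]
          refine (Finset.sum_congr rfl fun j _ => ?_).symm
          rw [dif_pos h]
        · rw [dif_neg h]
          symm
          refine Finset.sum_eq_zero fun j _ => ?_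
          rw [dif_neg h]
    _ = ∑ j : Fin B.n, ∑ i : Fin A.n, (if h : B.f j = x then
          (Wsub k x).mkQ (eqToHom h.symm ≫ (v j i ≫ u i j) ≫ eqToHom h) else 0) := by
        rw [Finset.sum_comm]
        refine Finset.sum_congr rfl fun j _ => Finset.sum_congr rfl fun i _ => ?_
        exact key_term k hrep₁ hrep₃ (A.mem i) (B.mem j) (A.loc i) (B.loc j) (u i j) (v j i) x
    _ = ∑ j : Fin B.n, if h : B.f j = x then
          (Wsub k x).mkQ (eqToHom h.symm ≫ biproduct.ι B.f j ≫ B.iso.inv ≫ (g ≫ f) ≫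
            B.iso.hom ≫ biproduct.π B.f j ≫ eqToHom h) else 0 := by
        refine Finset.sum_congr rfl fun j _ => ?_
        by_cases h : B.f j = x
        · rw [dif_pos h]
          have : eqToHom h.symm ≫ biproduct.ι B.f j ≫ B.iso.inv ≫ (g ≫ f) ≫
                B.iso.hom ≫ biproduct.π B.f j ≫ eqToHom h
              = ∑ i : Fin A.n, eqToHom h.symm ≫ (v j i ≫ u i j) ≫ eqToHom h := by
            rw [show eqToHom h.symm ≫ biproduct.ι B.f j ≫ B.iso.inv ≫ (g ≫ f) ≫
                  B.iso.hom ≫ biproduct.π B.f j ≫ eqToHom h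
                = eqToHom h.symm ≫ (biproduct.ι B.f j ≫ B.iso.inv ≫ (g ≫ f) ≫
                  B.iso.hom ≫ biproduct.π B.f j) ≫ eqToHom h by simp only [Category.assoc],
              mor2 j, Preadditive.sum_comp, Preadditive.comp_sum]
          rw [this, map_sum]
          refine Finset.sum_congr rfl fun i _ => ?_
          rw [dif_pos h]
        · rw [dif_neg h]
          refine Finset.sum_eq_zero fun i _ => ?_
          rw [dif_neg h]

end TauRel
section TauId

variable {C : Type u} [Category.{v} C] [Preadditive C] [CategoryTheory.Linear k C]
  [HasFiniteBiproducts C] {Irep : Set C}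

theorem tau_id (hrep₁ : ∀ x ∈ Irep, Indecomposable x)
    (hrep₃ : ∀ y ∈ Irep, ∀ y' ∈ Irep, Nonempty (y ≅ y') → y = y')
    (d : ∀ w : C, DecData C Irep w) (x : C) (hx : x ∈ Irep) :
    tau k d x (𝟙 x) = fun w => if h : x = w then (Wsub k w).mkQ (𝟙 w) else 0 := by
  have hn : (d x).n = 1 := n_eq_one_of_indecomposable (hrep₁ x hx) _ _
    (fun i => (hrep₁ _ ((d x).mem i)).1) (d x).iso
  have i0 : Fin (d x).n := ⟨0, by rw [hn]; exact Nat.zero_lt_one⟩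
  have hfi : ∀ i, (d x).f i = x := fun i => hrep₃ _ ((d x).mem i) x hx
    ⟨(biproductOfOne hn (d x).f i).symm ≪≫ (d x).iso.symm⟩
  funext w
  rw [tau_apply]
  by_cases hxw : x = w
  · rw [dif_pos hxw]
    have hterm : ∀ i : Fin (d x).n,
        (if h : (d x).f i = w then
          (Wsub k w).mkQ (eqToHom h.symm ≫ biproduct.ι (d x).f i ≫ (d x).iso.inv ≫ 𝟙 x ≫
            (d x).iso.hom ≫ biproduct.π (d x).f i ≫ eqToHom h)
        else 0) = (Wsub k w).mkQ (𝟙 w) := by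
      intro i
      have h : (d x).f i = w := (hfi i).trans hxw
      rw [dif_pos h]
      congr 1
      simp [eqToHom_trans]
    exact (sum_fin_one hn _ i0).trans (hterm i0)
  · rw [dif_neg hxw]
    exact Finset.sum_eq_zero fun i _ => dif_neg (fun h => hxw (((hfi i).symm.trans h)))

theorem one_notin_Wsub (x : C) (hloc : IsLocalRing (End x))
    (hDx : ∀ (D : Type v) [Ring D] [Algebra k D] (π : End x →ₐ[k] D),
        Function.Surjective π →
        RingHom.ker (π : End x →+* D) = Ideal.jacobson (⊥ : Ideal (End x)) →
        (1 : D) ∉ Submodule.span k {z : D | ∃ a b : D, z = a * b - b * a}) :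
    (1 : End x) ∉ Wsub k x := by
  intro hmem
  haveI := hloc
  set J := Ideal.jacobson (⊥ : Ideal (End x)) with hJ
  let I : TwoSidedIdeal (End x) := TwoSidedIdeal.mk' (J : Set (End x))
    J.zero_mem (fun ha hb => J.add_mem ha hb) (fun ha => J.neg_mem ha)
    (fun {r s} hs => J.mul_mem_left r hs)
    (fun {r s} hr => mem_jacobson_bot_of_not_isUnit
      (fun hu => (not_isUnit_of_mem_jacobson_bot hr) (myUnit_of_mul_right hu)))
  let c := I.ringCon
  let D := c.Quotient
  let π₀ : End x →+* D := c.mk'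
  have hπ₀ : ∀ t : End x, π₀ t = Quotient.mk'' t := fun _ => rfl
  have hcomm : ∀ (r : k) (s : D),
      (π₀.comp (algebraMap k (End x))) r * s = s * (π₀.comp (algebraMap k (End x))) r := by
    intro r s
    refine Quotient.inductionOn' s (fun t => ?_)
    show π₀ _ * π₀ t = π₀ t * π₀ _
    rw [← map_mul, ← map_mul, Algebra.commutes]
  letI : Algebra k D := RingHom.toAlgebra' (π₀.comp (algebraMap k (End x))) hcomm
  let π : End x →ₐ[k] D := { toRingHom := π₀, commutes' := fun r => rfl }
  have hsurj : Function.Surjective π := fun s => Quotient.inductionOn' s (fun t => ⟨t, rfl⟩)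
  have hker : RingHom.ker (π : End x →+* D) = J := by
    ext t
    rw [RingHom.mem_ker]
    have h2 : ((π : End x →+* D) t = 0) ↔ c t 0 := by
      rw [show (0 : D) = π₀ 0 from (map_zero π₀).symm]
      exact RingCon.eq c
    rw [h2, show (c t 0 ↔ t - 0 ∈ I) from I.rel_iff t 0, sub_zero]
    exact TwoSidedIdeal.mem_mk' _ _ _ _ _ _ t
  refine hDx D π hsurj hker ?_
  have hmap : Submodule.map π.toLinearMap (Wsub k x)
      ≤ Submodule.span k {z : D | ∃ a b : D, z = a * b - b * a} := by
    rw [Wsub, Submodule.map_sup]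
    apply sup_le
    · rintro _ ⟨t, ht, rfl⟩
      have ht2 : t ∈ RingHom.ker (π : End x →+* D) := by rw [hker]; exact ht
      have ht' : π t = 0 := RingHom.mem_ker.mp ht2
      rw [show π.toLinearMap t = π t from rfl, ht']
      exact Submodule.zero_mem _
    · rw [Submodule.map_span]
      apply Submodule.span_mono
      rintro _ ⟨s, ⟨a2, b2, rfl⟩, rfl⟩
      refine ⟨π a2, π b2, ?_⟩
      show π (a2 * b2 - b2 * a2) = _
      rw [map_sub, map_mul, map_mul]
  exact hmap ⟨1, hmem, map_one π⟩

end TauId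

/-- Let `C` be a `k`-linear Krull–Schmidt category, `Irep` a set of
representatives of the isomorphism classes of indecomposable objects, and for `x ∈ Irep`
let `D_x = End x / J(End x)`.  If for every `x ∈ Irep` the identity of `D_x` does not lie in
the `k`-span of commutators, then the Chern character `h_C : K₀(C) ⊗ k → Tr(C)` is
injective. -/
theorem chern_injective_of_one_not_mem_commutator_span
    (C : Type u) [Category.{v} C] [Preadditive C] [CategoryTheory.Linear k C]
    [HasFiniteBiproducts C]
    (hKS : KrullSchmidt k C)
    (Irep : Set C)
    (hrep₁ : ∀ x ∈ Irep, CategoryTheory.Indecomposable x)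
    (hrep₂ : ∀ x : C, CategoryTheory.Indecomposable x → ∃ y ∈ Irep, Nonempty (x ≅ y))
    (hrep₃ : ∀ y ∈ Irep, ∀ y' ∈ Irep, Nonempty (y ≅ y') → y = y')
    (hD : ∀ x ∈ Irep, ∀ (D : Type v) [Ring D] [Algebra k D] (π : End x →ₐ[k] D),
        Function.Surjective π →
        RingHom.ker (π : End x →+* D) = Ideal.jacobson (⊥ : Ideal (End x)) →
        (1 : D) ∉ Submodule.span k {z : D | ∃ a b : D, z = a * b - b * a}) :
    Function.Injective (chern k C) := by
  -- choose decompositions into representatives with local endomorphism rings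
  have hdecE : ∀ z : C, Nonempty (DecData C Irep z) := by
    intro z
    obtain ⟨n, g, hg, ⟨e⟩⟩ := hKS.1 z
    choose rep hmem hiso using fun i => hrep₂ (g i) (hg i).1
    have isos : ∀ i, g i ≅ rep i := fun i => (hiso i).some
    exact ⟨⟨n, rep, hmem, fun i => isLocalRing_of_ringEquiv (conjRing (isos i)) (hg i).2,
      e ≪≫ biproduct.mapIso isos⟩⟩
  let d : ∀ z : C, DecData C Irep z := fun z => Classical.choice (hdecE z)
  -- the local trace map
  let T0 : (DirectSum C fun x : C => x ⟶ x) →ₗ[k] (∀ x : C, End x ⧸ Wsub k x) :=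
    DirectSum.toModule k C _ (fun z => tau k d z)
  have hrel : traceRel k C ≤ LinearMap.ker T0 := by
    rw [traceRel, Submodule.span_le]
    rintro _ ⟨a, b, f, g, rfl⟩
    rw [SetLike.mem_coe, LinearMap.mem_ker, map_sub,
      ← DirectSum.lof_eq_of k, ← DirectSum.lof_eq_of k,
      DirectSum.toModule_lof, DirectSum.toModule_lof]
    exact sub_eq_zero_of_eq (tau_rel k hrep₁ hrep₃ d f g)
  let T : Trace k C →ₗ[k] (∀ x : C, End x ⧸ Wsub k x) := Submodule.liftQ _ T0 hrel
  -- `T ∘ chern` on generators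
  have hTx : ∀ x : C, x ∈ Irep → T (chern k C (K0mk k x))
      = fun w => if h : x = w then (Wsub k w).mkQ (𝟙 w) else 0 := by
    intro x hx
    have h1 : chern k C (K0mk k x) = traceMk k (𝟙 x) := by
      rw [K0mk, chern, Submodule.liftQ_apply, Finsupp.linearCombination_single, one_smul]
    have h2 : T (traceMk k (𝟙 x)) = tau k d x (𝟙 x) := by
      rw [traceMk, Submodule.liftQ_apply, ← DirectSum.lof_eq_of k, DirectSum.toModule_lof]
    rw [h1, h2, tau_id k hrep₁ hrep₃ d x hx]
  -- the class of the identity is nonzero at representatives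
  have hne : ∀ x : C, x ∈ Irep → ((Wsub k x).mkQ (𝟙 x) ≠ 0) := by
    intro x hx h0
    have hloc : IsLocalRing (End x) := by
      have hn : (d x).n = 1 := n_eq_one_of_indecomposable (hrep₁ x hx) _ _
        (fun i => (hrep₁ _ ((d x).mem i)).1) (d x).iso
      have i0 : Fin (d x).n := ⟨0, by rw [hn]; exact Nat.zero_lt_one⟩
      have hfi : (d x).f i0 = x := hrep₃ _ ((d x).mem i0) x hx
        ⟨(biproductOfOne hn (d x).f i0).symm ≪≫ (d x).iso.symm⟩
      rw [← hfi]
      exact (d x).loc i0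
    rw [Submodule.mkQ_apply, Submodule.Quotient.mk_eq_zero] at h0
    exact one_notin_Wsub k x hloc (hD x hx) h0
  -- kernel of chern is trivial
  have hker0 : ∀ u, chern k C u = 0 → u = 0 := by
    intro u hu
    obtain ⟨cc, rfl⟩ := Submodule.Quotient.mk_surjective _ u
    have hmkQ : (Submodule.Quotient.mk cc : K0k k C)
        = Finsupp.linearCombination k (fun z : C => K0mk k z) cc := by
      have : (K0Rel k C).mkQ = Finsupp.linearCombination k (fun z : C => K0mk k z) :=
        Finsupp.lhom_ext' fun z => LinearMap.ext_ring
          (by rw [LinearMap.comp_apply, LinearMap.comp_apply, Finsupp.lsingle_apply,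
                Finsupp.linearCombination_single, one_smul, Submodule.mkQ_apply, K0mk])
      rw [← this, Submodule.mkQ_apply]
    have hu' : (Submodule.Quotient.mk cc : K0k k C)
        ∈ Submodule.span k (Set.range fun i : Irep => K0mk k (i : C)) := by
      rw [hmkQ, Finsupp.linearCombination_apply]
      refine Submodule.sum_mem _ fun z _ => Submodule.smul_mem _ _ ?_
      rw [K0mk_eq_of_iso k ⟨(d z).iso⟩, K0mk_biproduct]
      exact Submodule.sum_mem _ fun i _ =>
        Submodule.subset_span ⟨⟨(d z).f i, (d z).mem i⟩, rfl⟩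
    rw [Finsupp.mem_span_range_iff_exists_finsupp] at hu'
    obtain ⟨e, he⟩ := hu'
    have heval : ∀ i0 : Irep, e i0 = 0 := by
      intro i0
      let L : K0k k C →ₗ[k] (End (i0 : C) ⧸ Wsub k (i0 : C)) :=
        (LinearMap.proj (R := k) (φ := fun x : C => End x ⧸ Wsub k x) (i0 : C)) ∘ₗ T ∘ₗ chern k C
      have hL : ∀ i : Irep, L (K0mk k (i : C))
          = if _ : (i : C) = (i0 : C) then (Wsub k (i0 : C)).mkQ (𝟙 (i0 : C)) else 0 := by
        intro i
        show (T (chern k C (K0mk k (i : C)))) (i0 : C) = _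
        rw [hTx _ i.2]
      have h0 : L (e.sum fun i r => r • K0mk k (i : C)) = 0 := by
        rw [he]
        show (LinearMap.proj (R := k) (φ := fun x : C => End x ⧸ Wsub k x) (i0 : C)) (T (chern k C (Submodule.Quotient.mk cc))) = 0
        rw [hu, map_zero, map_zero]
      rw [map_finsuppSum, Finsupp.sum_eq_single i0
        (fun i _ hne' => by rw [map_smul, hL i, dif_neg (fun h => hne' (Subtype.ext h)), smul_zero])
        (fun _ => by rw [zero_smul, map_zero])] at h0
      rw [map_smul, hL i0, dif_pos rfl] at h0
      rcases smul_eq_zero.mp h0 with h | h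
      · exact h
      · exact absurd h (hne _ i0.2)
    have he0 : e = 0 := Finsupp.ext heval
    rw [← he, he0, Finsupp.sum_zero_index]
  intro u v huv
  have := hker0 (u - v) (by rw [map_sub, huv, sub_self])
  exact sub_eq_zero.mp this
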